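/- For every integer n ≥ 1 and every λ > 0, one has the identity λ φ₀'(λ) − φ₀(λ) = ∑_{j=1}^∞ (2j−1) b_j λ^{2j} − 1; consequently there exists exactly one positive real number λ₀ satisfying λ₀ φ₀'(λ₀) = φ₀(λ₀). -/

import Mathlib

open Real Filter

noncomputable def b (n : ℕ) (j : ℕ) : ℝ :=
  ∏ ℓ ∈ Finset.Icc 1 j, 1 / (2 * (ℓ : ℝ) * ((n : ℝ) + 2 * ((ℓ : ℝ) - 1)))

noncomputable def phi0 (n : ℕ) (ρ : ℝ) : ℝ := ∑' j : ℕ, b n j * ρ ^ (2 * j)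

/-! Auxiliary lemmas -/

lemma b_zero (n : ℕ) : b n 0 = 1 := by simp [b]

lemma b_succ (n : ℕ) (j : ℕ) :
    b n (j + 1) = b n j * (1 / (2 * ((j : ℝ) + 1) * ((n : ℝ) + 2 * (j : ℝ)))) := by
  unfold b
  rw [Finset.prod_Icc_succ_top (Nat.le_add_left 1 j)]
  congr 1
  push_cast
  ring_nf

lemma b_pos (n : ℕ) (hn : 1 ≤ n) (j : ℕ) : 0 < b n j := by
  induction j with
  | zero => simp [b_zero]
  | succ k ih =>
    rw [b_succ]
    have h1 : (0:ℝ) < 2 * ((k : ℝ) + 1) * ((n : ℝ) + 2 * (k : ℝ)) := by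
      have : (1:ℝ) ≤ (n:ℝ) := by exact_mod_cast hn
      positivity
    positivity

lemma b_le (n : ℕ) (hn : 1 ≤ n) (j : ℕ) : b n j ≤ 1 / (2 ^ j * (j.factorial : ℝ)) := by
  induction j with
  | zero => simp [b_zero]
  | succ k ih =>
    rw [b_succ]
    have hnn : (1:ℝ) ≤ (n:ℝ) := by exact_mod_cast hn
    have h1 : (1:ℝ) ≤ (n : ℝ) + 2 * (k : ℝ) := by
      have := Nat.cast_nonneg (α := ℝ) k; linarith
    have h2 : (0:ℝ) < 2 * ((k : ℝ) + 1) := by positivity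
    have key : (1 : ℝ) / (2 * ((k : ℝ) + 1) * ((n : ℝ) + 2 * (k : ℝ)))
        ≤ 1 / (2 * ((k : ℝ) + 1)) := by
      rw [div_le_div_iff₀ (by positivity) (by positivity)]
      nlinarith
    have hb := b_pos n hn k
    calc b n k * (1 / (2 * ((k : ℝ) + 1) * ((n : ℝ) + 2 * (k : ℝ))))
        ≤ (1 / (2 ^ k * (k.factorial : ℝ))) * (1 / (2 * ((k : ℝ) + 1))) := by
          apply mul_le_mul ih key (by positivity) (by positivity)
      _ = 1 / (2 ^ (k+1) * ((k+1).factorial : ℝ)) := by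
          rw [Nat.factorial_succ]
          push_cast
          field_simp
          ring
  
/-- Summability of `(j+1) * y^j / j!`. -/
lemma summable_poly (y : ℝ) : Summable (fun j : ℕ => ((j : ℝ) + 1) * (y ^ j / (j.factorial : ℝ))) := by
  have h1 : Summable (fun j : ℕ => (j : ℝ) * (y ^ j / (j.factorial : ℝ))) := by
    rw [← summable_nat_add_iff 1]
    have : (fun j : ℕ => ((j + 1 : ℕ) : ℝ) * (y ^ (j+1) / ((j+1).factorial : ℝ)))
        = fun j : ℕ => y * (y ^ j / (j.factorial : ℝ)) := by
      funext j
      have hf : ((j.factorial : ℝ) : ℝ) ≠ 0 := by exact_mod_cast (Nat.factorial_pos j).ne'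
      rw [Nat.factorial_succ]
      push_cast
      field_simp
      ring
    rw [this]
    exact (Real.summable_pow_div_factorial y).mul_left y
  have h2 := Real.summable_pow_div_factorial y
  have := h1.add h2
  convert this using 1
  funext j
  ring

/-- Generic summability for our series. -/
lemma gen_summable (a : ℕ → ℝ) (m : ℕ) (A : ℝ)
    (ha : ∀ j, |a j| ≤ A * ((j : ℝ) + 1) / (2 ^ j * (j.factorial : ℝ))) (x : ℝ) :
    Summable (fun j : ℕ => a j * x ^ (2 * j + m)) := by
  set R : ℝ := |x| + 1 with hR
  have hR1 : (1:ℝ) ≤ R := by have := abs_nonneg x; simp only [hR]; linarith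
  have hxR : |x| ≤ R := by simp [hR]
  apply Summable.of_norm
  have key : ∀ j : ℕ, ‖a j * x ^ (2 * j + m)‖ ≤
      (A * R ^ m) * (((j:ℝ) + 1) * ((R^2/2) ^ j / (j.factorial : ℝ))) := by
    intro j
    have hA0 : 0 ≤ A := by
      have := (abs_nonneg (a 0)).trans (ha 0)
      simpa using this
    have hfj : (0:ℝ) < (j.factorial : ℝ) := by exact_mod_cast Nat.factorial_pos j
    have h2j : (0:ℝ) < 2 ^ j := by positivity
    rw [norm_mul, norm_pow, Real.norm_eq_abs, Real.norm_eq_abs]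
    have hx1 : |x| ^ (2 * j + m) ≤ R ^ (2 * j + m) :=
      pow_le_pow_left₀ (abs_nonneg x) hxR _
    calc |a j| * |x| ^ (2 * j + m)
        ≤ (A * ((j : ℝ) + 1) / (2 ^ j * (j.factorial : ℝ))) * R ^ (2 * j + m) := by
          apply mul_le_mul (ha j) hx1 (by positivity) (by positivity)
      _ = (A * R ^ m) * (((j:ℝ) + 1) * ((R^2/2) ^ j / (j.factorial : ℝ))) := by
          rw [pow_add, pow_mul, div_pow]
          field_simp
  exact Summable.of_nonneg_of_le (fun j => norm_nonneg _) key
    (((summable_poly (R^2/2)).mul_left (A * R ^ m)))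

/-- Generic differentiability for our series. -/
lemma gen_hasDerivAt (a : ℕ → ℝ) (m : ℕ) (A : ℝ)
    (ha : ∀ j, |a j| ≤ A / (2 ^ j * (j.factorial : ℝ))) (x : ℝ) :
    HasDerivAt (fun t : ℝ => ∑' j : ℕ, a j * t ^ (2 * j + m))
      (∑' j : ℕ, a j * (((2 * j + m : ℕ) : ℝ) * x ^ (2 * j + m - 1))) x := by
  have hA0 : 0 ≤ A := by
    have := (abs_nonneg (a 0)).trans (ha 0)
    simpa using this
  have ha' : ∀ j, |a j| ≤ A * ((j : ℝ) + 1) / (2 ^ j * (j.factorial : ℝ)) := by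
    intro j
    refine (ha j).trans ?_
    have hfj : (0:ℝ) < (j.factorial : ℝ) := by exact_mod_cast Nat.factorial_pos j
    have h2j : (0:ℝ) < 2 ^ j := by positivity
    apply div_le_div_of_nonneg_right ?_ (by positivity)
    nlinarith [Nat.cast_nonneg (α := ℝ) j]
  set R : ℝ := |x| + 1 with hR
  have hR1 : (1:ℝ) ≤ R := by have := abs_nonneg x; simp only [hR]; linarith
  have hR0 : (0:ℝ) < R := by linarith
  set u : ℕ → ℝ := fun j => (A * R ^ m * (2 + m)) * (((j:ℝ) + 1) * ((R^2/2) ^ j / (j.factorial : ℝ)))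
    with hu
  have hu_sum : Summable u := (summable_poly (R^2/2)).mul_left _
  have hball : x ∈ Metric.ball (0:ℝ) R := by
    simp [Real.norm_eq_abs, hR]
  refine hasDerivAt_tsum_of_isPreconnected hu_sum Metric.isOpen_ball
    (convex_ball (0:ℝ) R).isPreconnected
    (fun j y _ => ((hasDerivAt_pow (2*j+m) y).const_mul (a j)))
    (fun j y hy => ?_) hball (gen_summable a m A ha' x) hball
  -- derivative bound
  have hyR : |y| ≤ R := by
    have := mem_ball_zero_iff.mp hy
    rw [Real.norm_eq_abs] at this
    linarith
  have hfj : (0:ℝ) < (j.factorial : ℝ) := by exact_mod_cast Nat.factorial_pos j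
  have h2j : (0:ℝ) < 2 ^ j := by positivity
  rw [Real.norm_eq_abs, abs_mul, abs_mul, abs_pow, Nat.abs_cast]
  have hy1 : |y| ^ (2 * j + m - 1) ≤ R ^ (2 * j + m) := by
    calc |y| ^ (2 * j + m - 1) ≤ R ^ (2 * j + m - 1) :=
          pow_le_pow_left₀ (abs_nonneg y) hyR _
      _ ≤ R ^ (2 * j + m) := pow_le_pow_right₀ hR1 (Nat.sub_le _ _)
  have hcoef : ((2 * j + m : ℕ) : ℝ) ≤ (2 + m) * ((j:ℝ) + 1) := by
    push_cast
    nlinarith [Nat.cast_nonneg (α := ℝ) j, Nat.cast_nonneg (α := ℝ) m]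
  calc |a j| * (((2 * j + m : ℕ) : ℝ) * |y| ^ (2 * j + m - 1))
      ≤ (A / (2 ^ j * (j.factorial : ℝ))) * (((2 + m) * ((j:ℝ) + 1)) * R ^ (2 * j + m)) := by
        apply mul_le_mul (ha j) ?_ (by positivity) (by positivity)
        apply mul_le_mul hcoef hy1 (by positivity) (by positivity)
    _ = u j := by
        rw [hu]
        simp only
        rw [pow_add, pow_mul, div_pow]
        field_simp

/-- The derivative of `phi0`. -/
lemma b_abs_le (n : ℕ) (hn : 1 ≤ n) (j : ℕ) : |b n j| ≤ 1 / (2 ^ j * (j.factorial : ℝ)) := by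
  rw [abs_of_pos (b_pos n hn j)]; exact b_le n hn j

lemma phi0_eq (n : ℕ) : phi0 n = fun t : ℝ => ∑' j : ℕ, b n j * t ^ (2 * j + 0) := by
  funext t; simp [phi0]

lemma phi0_hasDerivAt (n : ℕ) (hn : 1 ≤ n) (x : ℝ) :
    HasDerivAt (phi0 n)
      (∑' j : ℕ, b n j * (((2 * j : ℕ) : ℝ) * x ^ (2 * j - 1))) x := by
  rw [phi0_eq]
  have := gen_hasDerivAt (b n) 0 1 (fun j => by simpa using b_abs_le n hn j) x
  simpa using this

lemma deriv_phi0 (n : ℕ) (hn : 1 ≤ n) (x : ℝ) :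
    deriv (phi0 n) x = ∑' j : ℕ, b n j * (((2 * j : ℕ) : ℝ) * x ^ (2 * j - 1)) :=
  (phi0_hasDerivAt n hn x).deriv

/-- Coefficients of the auxiliary series `H`. -/
noncomputable def cH (n : ℕ) (j : ℕ) : ℝ := (2 * ((j : ℝ) + 1) - 1) * b n (j + 1)

lemma cH_pos (n : ℕ) (hn : 1 ≤ n) (j : ℕ) : 0 < cH n j := by
  unfold cH
  have := b_pos n hn (j + 1)
  have hj : (0:ℝ) ≤ (j : ℝ) := Nat.cast_nonneg j
  nlinarith

lemma cH_abs_le (n : ℕ) (hn : 1 ≤ n) (j : ℕ) : |cH n j| ≤ 1 / (2 ^ j * (j.factorial : ℝ)) := by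
  rw [abs_of_pos (cH_pos n hn j)]
  unfold cH
  have hnn : (1:ℝ) ≤ (n:ℝ) := by exact_mod_cast hn
  have hb := b_pos n hn j
  have hbs : b n (j+1) = b n j * (1 / (2 * ((j : ℝ) + 1) * ((n : ℝ) + 2 * (j : ℝ)))) :=
    b_succ n j
  have hj : (0:ℝ) ≤ (j : ℝ) := Nat.cast_nonneg j
  have key : (2 * ((j : ℝ) + 1) - 1) * b n (j + 1) ≤ b n j := by
    rw [hbs]
    rw [div_eq_inv_mul, mul_one]
    have hpos : (0:ℝ) < 2 * ((j : ℝ) + 1) * ((n : ℝ) + 2 * (j : ℝ)) := by positivity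
    rw [show (2 * ((j : ℝ) + 1) - 1) * (b n j * (2 * ((j : ℝ) + 1) * ((n : ℝ) + 2 * (j : ℝ)))⁻¹)
        = b n j * ((2 * ((j : ℝ) + 1) - 1) / (2 * ((j : ℝ) + 1) * ((n : ℝ) + 2 * (j : ℝ)))) by
          field_simp]
    have : (2 * ((j : ℝ) + 1) - 1) / (2 * ((j : ℝ) + 1) * ((n : ℝ) + 2 * (j : ℝ))) ≤ 1 := by
      rw [div_le_one hpos]
      nlinarith
    nlinarith
  exact key.trans (b_le n hn j)

/-- The function `H`. -/
noncomputable def Hfun (n : ℕ) (l : ℝ) : ℝ := ∑' j : ℕ, cH n j * l ^ (2 * j + 2)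

lemma Hfun_eq_stmt (n : ℕ) (l : ℝ) :
    Hfun n l = ∑' j : ℕ, (2 * ((j : ℝ) + 1) - 1) * b n (j + 1) * l ^ (2 * (j + 1)) := by
  unfold Hfun cH
  apply tsum_congr
  intro j
  rw [show 2 * (j + 1) = 2 * j + 2 from by ring]

lemma summable_Hfun (n : ℕ) (hn : 1 ≤ n) (x : ℝ) :
    Summable (fun j : ℕ => cH n j * x ^ (2 * j + 2)) := by
  apply gen_summable (cH n) 2 1
  intro j
  refine (cH_abs_le n hn j).trans ?_
  have hfj : (0:ℝ) < (j.factorial : ℝ) := by exact_mod_cast Nat.factorial_pos j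
  have h2j : (0:ℝ) < 2 ^ j := by positivity
  apply div_le_div_of_nonneg_right ?_ (by positivity)
  nlinarith [Nat.cast_nonneg (α := ℝ) j]

lemma Hfun_continuous (n : ℕ) (hn : 1 ≤ n) : Continuous (Hfun n) := by
  rw [continuous_iff_continuousAt]
  intro x
  exact (gen_hasDerivAt (cH n) 2 1 (cH_abs_le n hn) x).continuousAt

theorem stmt3 (n : ℕ) (hn : 1 ≤ n) :
    (∀ l : ℝ, 0 < l →
      l * deriv (phi0 n) l - phi0 n l =
        (∑' j : ℕ, (2 * ((j : ℝ) + 1) - 1) * b n (j + 1) * l ^ (2 * (j + 1))) - 1) ∧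
    (∃! l : ℝ, 0 < l ∧ l * deriv (phi0 n) l = phi0 n l) := by
  have hnn : (1:ℝ) ≤ (n:ℝ) := by exact_mod_cast hn
  -- summability facts
  have sum_phi : ∀ x : ℝ, Summable (fun j : ℕ => b n j * x ^ (2 * j)) := by
    intro x
    have := gen_summable (b n) 0 1 (fun j => by
      refine (b_abs_le n hn j).trans ?_
      have hfj : (0:ℝ) < (j.factorial : ℝ) := by exact_mod_cast Nat.factorial_pos j
      have h2j : (0:ℝ) < 2 ^ j := by positivity
      apply div_le_div_of_nonneg_right ?_ (by positivity)
      nlinarith [Nat.cast_nonneg (α := ℝ) j]) x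
    simpa using this
  have sum_d : ∀ x : ℝ, Summable (fun j : ℕ => ((2 * j : ℕ) : ℝ) * b n j * x ^ (2 * j)) := by
    intro x
    have := gen_summable (fun j => ((2 * j : ℕ) : ℝ) * b n j) 0 2 (fun j => by
      have hb := b_pos n hn j
      have hble := b_le n hn j
      have hfj : (0:ℝ) < (j.factorial : ℝ) := by exact_mod_cast Nat.factorial_pos j
      have h2j : (0:ℝ) < 2 ^ j := by positivity
      rw [abs_of_nonneg (by positivity)]
      have h1 : ((2 * j : ℕ) : ℝ) ≤ 2 * ((j:ℝ) + 1) := by push_cast; linarith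
      calc ((2 * j : ℕ) : ℝ) * b n j ≤ (2 * ((j:ℝ) + 1)) * (1 / (2 ^ j * (j.factorial : ℝ))) := by
            apply mul_le_mul h1 hble (le_of_lt hb) (by positivity)
        _ = 2 * ((j:ℝ) + 1) / (2 ^ j * (j.factorial : ℝ)) := by ring) x
    simpa using this
  -- the key identity
  have key : ∀ l : ℝ, 0 < l →
      l * deriv (phi0 n) l - phi0 n l = Hfun n l - 1 := by
    intro l hl
    rw [deriv_phi0 n hn l]
    have step1 : l * (∑' j : ℕ, b n j * (((2 * j : ℕ) : ℝ) * l ^ (2 * j - 1)))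
        = ∑' j : ℕ, ((2 * j : ℕ) : ℝ) * b n j * l ^ (2 * j) := by
      rw [← tsum_mul_left]
      apply tsum_congr
      intro j
      match j with
      | 0 => simp
      | (k+1) =>
        have : 2 * (k + 1) - 1 + 1 = 2 * (k + 1) := by omega
        rw [show l * (b n (k+1) * (((2 * (k+1) : ℕ) : ℝ) * l ^ (2 * (k+1) - 1)))
            = ((2 * (k+1) : ℕ) : ℝ) * b n (k+1) * (l ^ (2 * (k+1) - 1) * l) by ring,
          ← pow_succ, this]
    rw [step1]
    unfold phi0
    rw [← Summable.tsum_sub (sum_d l) (sum_phi l)]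
    have step2 : ∑' j : ℕ, (((2 * j : ℕ) : ℝ) * b n j * l ^ (2 * j) - b n j * l ^ (2 * j))
        = ∑' j : ℕ, (2 * (j:ℝ) - 1) * b n j * l ^ (2 * j) := by
      apply tsum_congr
      intro j
      push_cast
      ring
    rw [step2]
    have sg : Summable (fun j : ℕ => (2 * (j:ℝ) - 1) * b n j * l ^ (2 * j)) := by
      have := (sum_d l).sub (sum_phi l)
      refine this.congr ?_
      intro j
      push_cast
      ring
    rw [Summable.tsum_eq_zero_add sg]
    have h0 : (2 * ((0:ℕ):ℝ) - 1) * b n 0 * l ^ (2 * 0) = -1 := by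
      simp [b_zero]
    rw [h0]
    have hshift : (∑' j : ℕ, (2 * ((j+1 : ℕ):ℝ) - 1) * b n (j+1) * l ^ (2 * (j+1)))
        = Hfun n l := by
      rw [Hfun_eq_stmt]
      apply tsum_congr
      intro j
      push_cast
      ring
    rw [hshift]
    ring
  constructor
  · intro l hl
    rw [key l hl, Hfun_eq_stmt]
  · -- existence and uniqueness
    have equiv : ∀ l : ℝ, 0 < l → (l * deriv (phi0 n) l = phi0 n l ↔ Hfun n l = 1) := by
      intro l hl
      have := key l hl
      constructor
      · intro h; rw [h] at this; linarith
      · intro h; rw [h] at this; linarith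
    -- H is strictly monotone on [0, ∞)
    have hmono : StrictMonoOn (Hfun n) (Set.Ici 0) := by
      intro p hp q hq hpq
      unfold Hfun
      apply Summable.tsum_lt_tsum_of_nonneg
      · intro j
        have := cH_pos n hn j
        have hp0 : (0:ℝ) ≤ p := hp
        positivity
      · intro j
        apply mul_le_mul_of_nonneg_left (pow_le_pow_left₀ hp (le_of_lt hpq) _)
          (le_of_lt (cH_pos n hn j))
      · apply mul_lt_mul_of_pos_left ?_ (cH_pos n hn 0)
        have : p ^ (2 * 0 + 2) = p ^ 2 := by norm_num
        rw [this]
        have : q ^ (2 * 0 + 2) = q ^ 2 := by norm_num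
        rw [this]
        apply pow_lt_pow_left₀ hpq hp
        norm_num
      · exact summable_Hfun n hn q
    have hH0 : Hfun n 0 = 0 := by
      unfold Hfun
      have : ∀ j : ℕ, cH n j * (0:ℝ) ^ (2 * j + 2) = 0 := by
        intro j
        rw [zero_pow (by omega : 2 * j + 2 ≠ 0), mul_zero]
      simp only [this, tsum_zero]
    -- Hfun n (2n) ≥ 1
    have hc0 : cH n 0 = 1 / (2 * (n:ℝ)) := by
      unfold cH
      rw [b_succ, b_zero]
      push_cast
      ring_nf
    have hbig : (1:ℝ) ≤ Hfun n (2 * n) := by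
      have hle : cH n 0 * ((2 * (n:ℝ)) ^ (2 * 0 + 2)) ≤ Hfun n (2 * n) := by
        unfold Hfun
        apply Summable.le_tsum (summable_Hfun n hn (2 * n)) 0
        intro j _
        have := cH_pos n hn j
        positivity
      have heq : cH n 0 * ((2 * (n:ℝ)) ^ (2 * 0 + 2)) = 2 * (n:ℝ) := by
        rw [hc0]
        have hne : (2 * (n:ℝ)) ≠ 0 := by positivity
        field_simp
        ring
      rw [heq] at hle
      linarith
    have h2n0 : (0:ℝ) ≤ 2 * (n:ℝ) := by positivity
    -- existence by IVT
    obtain ⟨l, hlmem, hleq⟩ : ∃ l ∈ Set.Icc (0:ℝ) (2 * n), Hfun n l = 1 := by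
      have := intermediate_value_Icc h2n0 ((Hfun_continuous n hn).continuousOn)
      have h1mem : (1:ℝ) ∈ Set.Icc (Hfun n 0) (Hfun n (2*n)) := by
        rw [hH0]
        exact ⟨by norm_num, hbig⟩
      obtain ⟨l, hl, hleq⟩ := this h1mem
      exact ⟨l, hl, hleq⟩
    have hlpos : 0 < l := by
      rcases lt_or_eq_of_le hlmem.1 with h | h
      · exact h
      · exfalso; rw [← h] at hleq; rw [hH0] at hleq; norm_num at hleq
    refine ⟨l, ⟨hlpos, (equiv l hlpos).mpr hleq⟩, ?_⟩
    rintro m ⟨hmpos, hmeq⟩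
    have hm1 : Hfun n m = 1 := (equiv m hmpos).mp hmeq
    exact hmono.injOn (Set.mem_Ici.mpr (le_of_lt hmpos)) (Set.mem_Ici.mpr (le_of_lt hlpos))
      (by rw [hm1, hleq])
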